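/- Let h ∈ ℝ³ satisfy h₃² - h₁² - h₂² = R² with 0 < R < 1 and h₃ < 0. Then the function u ↦ u₁h₁ + u₂h₂ + u₃h₃ + √(u₃² - u₁² - u₂²) is unbounded above on the cone {u : u₁² + u₂² ≤ u₃², u₃ ≥ 0}. -/
import Mathlib


theorem normal_R_lt_one_unbounded (h1 h2 h3 R : ℝ)
    (hR : h3 ^ 2 - h1 ^ 2 - h2 ^ 2 = R ^ 2) (hR0 : 0 < R) (hR1 : R < 1)
    (hh3 : h3 < 0) :
    ∀ M : ℝ, ∃ u1 u2 u3 : ℝ, u1 ^ 2 + u2 ^ 2 ≤ u3 ^ 2 ∧ 0 ≤ u3 ∧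
      M < u1 * h1 + u2 * h2 + u3 * h3 + Real.sqrt (u3 ^ 2 - u1 ^ 2 - u2 ^ 2) := by
  intro M
  have hRR : 0 < R * (1 - R) := mul_pos hR0 (by linarith)
  set ρ : ℝ := max 1 ((M + 1) / (R * (1 - R))) with hρdef
  have hρ1 : (1 : ℝ) ≤ ρ := le_max_left _ _
  have hρ0 : 0 < ρ := lt_of_lt_of_le one_pos hρ1
  have hρM : (M + 1) / (R * (1 - R)) ≤ ρ := le_max_right _ _
  refine ⟨ρ * h1, ρ * h2, -(ρ * h3), ?_, ?_, ?_⟩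
  · nlinarith [sq_nonneg R, sq_nonneg ρ]
  · nlinarith
  · have hsq : (-(ρ * h3)) ^ 2 - (ρ * h1) ^ 2 - (ρ * h2) ^ 2 = (ρ * R) ^ 2 := by
      ring_nf; nlinarith
    rw [hsq, Real.sqrt_sq (by positivity)]
    have hMρ : M + 1 ≤ ρ * (R * (1 - R)) := by
      rw [div_le_iff₀ hRR] at hρM; linarith
    nlinarith [hMρ]
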